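/- Let G, J be topological groups with G locally compact second countable equipped with a Haar measure, and let π : G → J be a Borel measurable map such that π(xy) = π(x)π(y) for almost every pair (x,y) ∈ G². Then π agrees almost everywhere with a Borel measurable group homomorphism G → J. -/

import Mathlib

open MeasureTheory

/-- Almost-homomorphism rigidity: if `G` is a locally compact second countable group with
Haar measure `μ`, `J` a second countable topological group, and `π : G → J` is Borel
measurable with `π(xy) = π(x)π(y)` for almost every pair `(x,y)`, then `π` agrees
almost everywhere with a Borel measurable group homomorphism. -/
theorem stmt17 {G J : Type*}
    [TopologicalSpace G] [Group G] [IsTopologicalGroup G]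
    [LocallyCompactSpace G] [SecondCountableTopology G]
    [MeasurableSpace G] [BorelSpace G]
    [TopologicalSpace J] [Group J] [IsTopologicalGroup J] [SecondCountableTopology J]
    [MeasurableSpace J] [BorelSpace J]
    (μ : Measure G) [μ.IsHaarMeasure]
    (π : G → J) (hπ : Measurable π)
    (h : ∀ᵐ p ∂(μ.prod μ), π (p.1 * p.2) = π p.1 * π p.2) :
    ∃ π' : G → J, Measurable π' ∧ (∀ x y : G, π' (x * y) = π' x * π' y) ∧
      π' =ᵐ[μ] π := by
  haveI : SigmaFinite μ := inferInstance
  have hμ : μ ≠ 0 := by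
    intro h0
    have : 0 < μ Set.univ := isOpen_univ.measure_pos μ ⟨1, trivial⟩
    rw [h0] at this
    simp at this
  haveI : (ae μ).NeBot := ae_neBot.mpr hμ
  -- For every `x`, the function `y ↦ π (x*y) * (π y)⁻¹` is a.e. constant.
  have hconst : ∀ x : G, ∃ c : J, ∀ᵐ y ∂μ, π (x * y) * (π y)⁻¹ = c := by
    intro x
    have h1 : ∀ᵐ p ∂(μ.prod μ), π (x * p.1 * p.2) = π (x * p.1) * π p.2 := by
      have mp : MeasurePreserving (fun p : G × G => (x * p.1, p.2)) (μ.prod μ) (μ.prod μ) :=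
        (measurePreserving_mul_left μ x).prod (MeasurePreserving.id μ)
      exact mp.quasiMeasurePreserving.tendsto_ae.eventually h
    have h2 : ∀ᵐ p ∂(μ.prod μ),
        π (x * (p.1 * p.2)) * (π (p.1 * p.2))⁻¹ = π (x * p.1) * (π p.1)⁻¹ := by
      filter_upwards [h1, h] with p e1 e2
      rw [← mul_assoc, e1, e2]
      group
    have h3 : ∀ᵐ p ∂(μ.prod μ),
        π (x * p.2) * (π p.2)⁻¹ = π (x * p.1) * (π p.1)⁻¹ := by
      have mp : MeasurePreserving (fun z : G × G => (z.1, z.1⁻¹ * z.2)) (μ.prod μ) (μ.prod μ) :=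
        measurePreserving_prod_inv_mul μ μ
      have := mp.quasiMeasurePreserving.tendsto_ae.eventually h2
      simpa using this
    obtain ⟨a, ha⟩ := (Measure.ae_ae_of_ae_prod h3).exists
    exact ⟨π (x * a) * (π a)⁻¹, ha⟩
  set π' : G → J := fun x => (hconst x).choose with hπ'def
  have spec : ∀ x : G, ∀ᵐ y ∂μ, π (x * y) * (π y)⁻¹ = π' x := fun x => (hconst x).choose_spec
  have uniq : ∀ x c, (∀ᵐ y ∂μ, π (x * y) * (π y)⁻¹ = c) → π' x = c := by
    intro x c hc
    obtain ⟨y, h1, h2⟩ := ((spec x).and hc).exists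
    rw [← h1, h2]
  refine ⟨π', ?_, ?_, ?_⟩
  · -- measurability
    intro S hS
    have hmF : Measurable (fun p : G × G => π (p.1 * p.2) * (π p.2)⁻¹) :=
      (hπ.comp measurable_mul).mul (hπ.comp measurable_snd).inv
    have hT : MeasurableSet {p : G × G | π (p.1 * p.2) * (π p.2)⁻¹ ∈ Sᶜ} := hmF hS.compl
    have hm : Measurable fun x =>
        μ (Prod.mk x ⁻¹' {p : G × G | π (p.1 * p.2) * (π p.2)⁻¹ ∈ Sᶜ}) :=
      measurable_measure_prodMk_left hT
    have heq : π' ⁻¹' S =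
        (fun x => μ (Prod.mk x ⁻¹' {p : G × G | π (p.1 * p.2) * (π p.2)⁻¹ ∈ Sᶜ})) ⁻¹' {0} := by
      ext x
      simp only [Set.mem_preimage, Set.mem_singleton_iff, measure_eq_zero_iff_ae_notMem]
      constructor
      · intro hx
        filter_upwards [spec x] with y hy
        simp only [Set.mem_preimage, Set.mem_setOf_eq, Set.mem_compl_iff, not_not]
        rw [hy]; exact hx
      · intro hx
        have : ∀ᵐ y ∂μ, π (x * y) * (π y)⁻¹ ∈ S := by
          filter_upwards [hx] with y hy
          simpa using hy
        obtain ⟨y, h1, h2⟩ := ((spec x).and this).exists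
        rw [← h1]; exact h2
    rw [heq]
    exact hm (measurableSet_singleton 0)
  · -- homomorphism
    intro a b
    have s1 : ∀ᵐ y ∂μ, π (a * (b * y)) * (π (b * y))⁻¹ = π' a :=
      (measurePreserving_mul_left μ b).quasiMeasurePreserving.tendsto_ae.eventually (spec a)
    have key : ∀ᵐ y ∂μ, π (a * b * y) * (π y)⁻¹ = π' a * π' b := by
      filter_upwards [s1, spec b] with y e1 e2
      calc π (a * b * y) * (π y)⁻¹
          = (π (a * (b * y)) * (π (b * y))⁻¹) * (π (b * y) * (π y)⁻¹) := by
            rw [mul_assoc a b y]; group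
        _ = π' a * π' b := by rw [e1, e2]
    exact uniq (a * b) _ key
  · -- a.e. equality
    have hfub : ∀ᵐ a ∂μ, ∀ᵐ b ∂μ, π (a * b) = π a * π b := Measure.ae_ae_of_ae_prod h
    filter_upwards [hfub] with a ha
    apply uniq
    filter_upwards [ha] with b hb
    rw [hb]; group
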